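/- The trefoil knot group ⟨a, b | aba = bab⟩ admits a surjective homomorphism onto the binary icosahedral group SL(2,5). -/

import Mathlib

def trefoilRels : Set (FreeGroup (Fin 2)) :=
  {FreeGroup.of 0 * FreeGroup.of 1 * FreeGroup.of 0 *
    (FreeGroup.of 1 * FreeGroup.of 0 * FreeGroup.of 1)⁻¹}

namespace TrefoilAux

instance : Fact (Nat.Prime 5) := ⟨by norm_num⟩

abbrev G5 := Matrix.SpecialLinearGroup (Fin 2) (ZMod 5)

def U (x : ZMod 5) : G5 := ⟨!![1, x; 0, 1], by simp [Matrix.det_fin_two_of]⟩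
def Lo (x : ZMod 5) : G5 := ⟨!![1, 0; x, 1], by simp [Matrix.det_fin_two_of]⟩

lemma U_val (x : ZMod 5) : (U x).1 = !![1, x; 0, 1] := rfl
lemma Lo_val (x : ZMod 5) : (Lo x).1 = !![1, 0; x, 1] := rfl

lemma U_mul (x y : ZMod 5) : U x * U y = U (x + y) := by
  apply Subtype.ext
  simp only [Matrix.SpecialLinearGroup.coe_mul, U_val]
  ext i j
  fin_cases i <;> fin_cases j <;>
    simp [Matrix.mul_apply, Fin.sum_univ_succ, add_comm]

lemma Lo_mul (x y : ZMod 5) : Lo x * Lo y = Lo (x + y) := by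
  apply Subtype.ext
  simp only [Matrix.SpecialLinearGroup.coe_mul, Lo_val]
  ext i j
  fin_cases i <;> fin_cases j <;>
    simp [Matrix.mul_apply, Fin.sum_univ_succ, add_comm]

lemma U_one_pow (n : ℕ) : U 1 ^ n = U n := by
  induction n with
  | zero =>
    apply Subtype.ext
    ext i j
    fin_cases i <;> fin_cases j <;> simp [U_val]
  | succ n ih =>
    rw [pow_succ, ih, U_mul]
    push_cast
    ring_nf

lemma Lo_neg_one_pow (n : ℕ) : Lo (-1) ^ n = Lo (-n) := by
  induction n with
  | zero =>
    apply Subtype.ext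
    ext i j
    fin_cases i <;> fin_cases j <;> simp [Lo_val]
  | succ n ih =>
    rw [pow_succ, ih, Lo_mul]
    push_cast
    ring_nf

lemma U_mem {H : Subgroup G5} (hA : U 1 ∈ H) (x : ZMod 5) : U x ∈ H := by
  have := pow_mem hA x.val
  rwa [U_one_pow, ZMod.natCast_val, ZMod.cast_id] at this

lemma Lo_mem {H : Subgroup G5} (hB : Lo (-1) ∈ H) (x : ZMod 5) : Lo x ∈ H := by
  have := pow_mem hB (-x).val
  rwa [Lo_neg_one_pow, ZMod.natCast_val, ZMod.cast_id, neg_neg] at this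

lemma decomp (g : G5) (hc : g.1 1 0 ≠ 0) :
    g = U ((g.1 0 0 - 1) * (g.1 1 0)⁻¹) * Lo (g.1 1 0) * U ((g.1 1 1 - 1) * (g.1 1 0)⁻¹) := by
  apply Subtype.ext
  simp only [Matrix.SpecialLinearGroup.coe_mul, U_val, Lo_val]
  obtain ⟨M, hM⟩ := g
  have hdet : M 0 0 * M 1 1 - M 0 1 * M 1 0 = 1 := by
    rw [← Matrix.det_fin_two]; exact hM
  simp only at hc ⊢
  ext i j
  fin_cases i <;> fin_cases j
  all_goals simp [Matrix.mul_apply, Fin.sum_univ_succ]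
  · field_simp
    ring
  · field_simp
    linear_combination -hdet
  · field_simp
    ring

lemma mem_of_ne (H : Subgroup G5) (hA : U 1 ∈ H) (hB : Lo (-1) ∈ H)
    (g : G5) (hc : g.1 1 0 ≠ 0) : g ∈ H := by
  rw [decomp g hc]
  exact mul_mem (mul_mem (U_mem hA _) (Lo_mem hB _)) (U_mem hA _)

lemma mem_all (H : Subgroup G5) (hA : U 1 ∈ H) (hB : Lo (-1) ∈ H) (g : G5) : g ∈ H := by
  by_cases hc : g.1 1 0 = 0
  · have hd : g.1 1 1 ≠ 0 := by
      intro hd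
      have hdet : g.1 0 0 * g.1 1 1 - g.1 0 1 * g.1 1 0 = 1 := by
        rw [← Matrix.det_fin_two]; exact g.2
      rw [hc, hd] at hdet
      simp at hdet
    have hg' : (g * Lo 1).1 1 0 ≠ 0 := by
      have : (g * Lo 1).1 1 0 = g.1 1 0 + g.1 1 1 := by
        simp [Lo_val, Matrix.mul_apply, Fin.sum_univ_succ]
      rw [this, hc, zero_add]
      exact hd
    have h1 : g * Lo 1 ∈ H := mem_of_ne H hA hB _ hg'
    have : g = (g * Lo 1) * Lo (-1) := by
      rw [mul_assoc, Lo_mul]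
      norm_num
      apply Subtype.ext
      ext i j
      fin_cases i <;> fin_cases j <;> simp [Lo_val]
    rw [this]
    exact mul_mem h1 hB
  · exact mem_of_ne H hA hB g hc

def gen : Fin 2 → G5 := ![U 1, Lo (-1)]

lemma hrel : ∀ r ∈ trefoilRels, FreeGroup.lift gen r = 1 := by
  intro r hr
  rw [trefoilRels, Set.mem_singleton_iff] at hr
  subst hr
  simp only [map_mul, map_inv, FreeGroup.lift_apply_of, gen, Matrix.cons_val_zero,
    Matrix.cons_val_one, Matrix.head_cons]
  rw [mul_inv_eq_one]
  apply Subtype.ext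
  simp only [Matrix.SpecialLinearGroup.coe_mul, U_val, Lo_val]
  ext i j
  fin_cases i <;> fin_cases j <;>
    simp [Matrix.mul_apply, Fin.sum_univ_succ]

end TrefoilAux

theorem trefoil_onto_SL2_5 :
    ∃ f : PresentedGroup trefoilRels →* Matrix.SpecialLinearGroup (Fin 2) (ZMod 5),
      Function.Surjective f := by
  refine ⟨PresentedGroup.toGroup TrefoilAux.hrel, ?_⟩
  intro g
  have hA : TrefoilAux.U 1 ∈ (PresentedGroup.toGroup TrefoilAux.hrel).range :=
    ⟨PresentedGroup.of 0, PresentedGroup.toGroup.of TrefoilAux.hrel⟩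
  have hB : TrefoilAux.Lo (-1) ∈ (PresentedGroup.toGroup TrefoilAux.hrel).range :=
    ⟨PresentedGroup.of 1, PresentedGroup.toGroup.of TrefoilAux.hrel⟩
  exact TrefoilAux.mem_all _ hA hB g
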